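/- (Bottom-block step of the maximality proof, Appendix B.) Let r ≥ 1 and q ≥ 1 be integers. Let S, S̄ ∈ ℂ^{(r+q)×(r+q)} be Hermitian positive definite with block partitions S = [[S₂₂,S₂₃],[S₃₂,S₃₃]], S̄ = [[S̄₂₂,S̄₂₃],[S̄₃₂,S̄₃₃]] (top-left blocks r×r, bottom-right blocks q×q), and let w = (w₂,w₃), w̄ = (w̄₂,w̄₃) ∈ ℂ^{r+q} be partitioned accordingly. Suppose w₃† S₃₃⁻¹ w₃ = w̄₃† S̄₃₃⁻¹ w̄₃ and (w₂ − S₂₃S₃₃⁻¹w₃)† (S₂₂ − S₂₃S₃₃⁻¹S₃₂)⁻¹ (w₂ − S₂₃S₃₃⁻¹w₃) = (w̄₂ − S̄₂₃S̄₃₃⁻¹w̄₃)† (S̄₂₂ − S̄₂₃S̄₃₃⁻¹S̄₃₂)⁻¹ (w̄₂ − S̄₂₃S̄₃₃⁻¹w̄₃). Then there exists a block upper-triangular matrix D = [[D₂₂,D₂₃],[0,D₃₃]] with D₂₂ ∈ ℂ^{r×r} and D₃₃ ∈ ℂ^{q×q} invertible, such that w = D w̄ and S = D S̄ D†. -/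

import Mathlib

open Matrix ComplexOrder

/-- Top block (size `r`) of a partitioned vector `w = (w₂, w₃)`. -/
def blkTop {r q : ℕ} (w : Fin r ⊕ Fin q → ℂ) : Fin r → ℂ := fun i => w (Sum.inl i)

/-- Bottom block (size `q`) of a partitioned vector `w = (w₂, w₃)`. -/
def blkBot {r q : ℕ} (w : Fin r ⊕ Fin q → ℂ) : Fin q → ℂ := fun i => w (Sum.inr i)

/-- Block `S₂₂` of `S = [[S₂₂, S₂₃], [S₃₂, S₃₃]]`. -/
def B22 {r q : ℕ} (S : Matrix (Fin r ⊕ Fin q) (Fin r ⊕ Fin q) ℂ) :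
    Matrix (Fin r) (Fin r) ℂ := S.submatrix Sum.inl Sum.inl

/-- Block `S₂₃`. -/
def B23 {r q : ℕ} (S : Matrix (Fin r ⊕ Fin q) (Fin r ⊕ Fin q) ℂ) :
    Matrix (Fin r) (Fin q) ℂ := S.submatrix Sum.inl Sum.inr

/-- Block `S₃₂`. -/
def B32 {r q : ℕ} (S : Matrix (Fin r ⊕ Fin q) (Fin r ⊕ Fin q) ℂ) :
    Matrix (Fin q) (Fin r) ℂ := S.submatrix Sum.inr Sum.inl

/-- Block `S₃₃`. -/
def B33 {r q : ℕ} (S : Matrix (Fin r ⊕ Fin q) (Fin r ⊕ Fin q) ℂ) :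
    Matrix (Fin q) (Fin q) ℂ := S.submatrix Sum.inr Sum.inr

/-- `w₂ − S₂₃ S₃₃⁻¹ w₃`. -/
noncomputable def wdot {r q : ℕ} (w : Fin r ⊕ Fin q → ℂ)
    (S : Matrix (Fin r ⊕ Fin q) (Fin r ⊕ Fin q) ℂ) : Fin r → ℂ :=
  blkTop w - (B23 S * (B33 S)⁻¹) *ᵥ blkBot w

/-- The Schur complement `S₂₂ − S₂₃ S₃₃⁻¹ S₃₂`. -/
noncomputable def schur {r q : ℕ} (S : Matrix (Fin r ⊕ Fin q) (Fin r ⊕ Fin q) ℂ) :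
    Matrix (Fin r) (Fin r) ℂ :=
  B22 S - B23 S * (B33 S)⁻¹ * B32 S

lemma exists_unitary_mulVec {n : Type*} [Fintype n] [DecidableEq n]
    (u v : n → ℂ) (h : star u ⬝ᵥ u = star v ⬝ᵥ v) :
    ∃ U : Matrix n n ℂ, Uᴴ * U = 1 ∧ U *ᵥ v = u := by
  classical
  let u' : EuclideanSpace ℂ n := WithLp.toLp 2 u
  let v' : EuclideanSpace ℂ n := WithLp.toLp 2 v
  have hinner : (inner ℂ u' u' : ℂ) = inner ℂ v' v' := by
    rw [EuclideanSpace.inner_eq_star_dotProduct, EuclideanSpace.inner_eq_star_dotProduct]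
    simpa [dotProduct_comm] using h
  have hnorm : ‖u'‖ = ‖v'‖ := by
    rw [inner_self_eq_norm_sq_to_K (𝕜 := ℂ), inner_self_eq_norm_sq_to_K (𝕜 := ℂ)] at hinner
    have h3 : ‖u'‖ ^ 2 = ‖v'‖ ^ 2 := by exact_mod_cast hinner
    nlinarith [norm_nonneg u', norm_nonneg v']
  by_cases hv0 : v = 0
  · refine ⟨1, by simp, ?_⟩
    have hv' : v' = 0 := by simp [v', hv0]
    have hu' : u' = 0 := by rw [← norm_eq_zero, hnorm, hv', norm_zero]
    have hu : u = 0 := by simpa [u'] using hu'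
    simp [hv0, hu]
  · obtain ⟨i₀, hi₀⟩ := Function.ne_iff.mp hv0
    have hv' : v' ≠ 0 := fun hc => hv0 (by simpa [v'] using hc)
    have hu' : u' ≠ 0 := by
      rw [← norm_ne_zero_iff, hnorm, norm_ne_zero_iff]; exact hv'
    have hnv : ‖v'‖ ≠ 0 := norm_ne_zero_iff.mpr hv'
    have hnu : ‖u'‖ ≠ 0 := norm_ne_zero_iff.mpr hu'
    have hcard : Module.finrank ℂ (EuclideanSpace ℂ n) = Fintype.card n :=
      finrank_euclideanSpace
    have honv : Orthonormal ℂ (Set.restrict {i₀} (fun _ : n => ((‖v'‖ : ℂ))⁻¹ • v')) := by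
      constructor
      · intro i
        simp only [Set.restrict, Set.restrict_apply, norm_smul, norm_inv, Complex.norm_real, Real.norm_eq_abs,
          abs_of_nonneg (norm_nonneg v')]
        field_simp
      · intro i j hij
        exact absurd (Subsingleton.elim i j) hij
    have honu : Orthonormal ℂ (Set.restrict {i₀} (fun _ : n => ((‖u'‖ : ℂ))⁻¹ • u')) := by
      constructor
      · intro i
        simp only [Set.restrict, Set.restrict_apply, norm_smul, norm_inv, Complex.norm_real, Real.norm_eq_abs,
          abs_of_nonneg (norm_nonneg u')]
        field_simp
      · intro i j hij
        exact absurd (Subsingleton.elim i j) hij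
    obtain ⟨b, hb⟩ := honv.exists_orthonormalBasis_extension_of_card_eq hcard
    obtain ⟨c, hc⟩ := honu.exists_orthonormalBasis_extension_of_card_eq hcard
    have hbi : b i₀ = ((‖v'‖ : ℂ))⁻¹ • v' := hb i₀ rfl
    have hci : c i₀ = ((‖u'‖ : ℂ))⁻¹ • u' := hc i₀ rfl
    set f : EuclideanSpace ℂ n ≃ₗᵢ[ℂ] EuclideanSpace ℂ n := b.repr.trans c.repr.symm with hf
    have hfb : ∀ i, f (b i) = c i := by
      intro i
      simp [hf, LinearIsometryEquiv.trans_apply, OrthonormalBasis.repr_self,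
        OrthonormalBasis.repr_symm_single]
    have hfv : f v' = u' := by
      have hv'eq : v' = (‖v'‖ : ℂ) • b i₀ := by
        rw [hbi, smul_smul]
        rw [mul_inv_cancel₀ (by exact_mod_cast hnv), one_smul]
      rw [hv'eq, _root_.map_smul, hfb, hci, smul_smul, hnorm,
        mul_inv_cancel₀ (by exact_mod_cast hnv), one_smul]
    set g : (n → ℂ) →ₗ[ℂ] (n → ℂ) :=
      (WithLp.linearEquiv 2 ℂ (n → ℂ)).toLinearMap ∘ₗ f.toLinearEquiv.toLinearMap ∘ₗ
        (WithLp.linearEquiv 2 ℂ (n → ℂ)).symm.toLinearMap with hg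
    have hgapp : ∀ x : n → ℂ, g x = (f (WithLp.toLp 2 x)).ofLp := fun x => rfl
    refine ⟨LinearMap.toMatrix' g, ?_, ?_⟩
    · ext i j
      have hcol : ∀ (i k : n), LinearMap.toMatrix' g k i = g (Pi.single i 1) k := by
        intro i k
        have hsingle : (fun j' : n => if j' = i then (1 : ℂ) else 0) = Pi.single i 1 := by
          funext j'
          simp [Pi.single_apply]
        rw [LinearMap.toMatrix'_apply]
      have entry : ((LinearMap.toMatrix' g)ᴴ * LinearMap.toMatrix' g) i j
          = ∑ k, star (g (Pi.single i 1) k) * g (Pi.single j 1) k := by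
        simp [Matrix.mul_apply, Matrix.conjTranspose_apply, hcol]
      let Pi' : EuclideanSpace ℂ n := WithLp.toLp 2 (Pi.single i 1)
      let Pj' : EuclideanSpace ℂ n := WithLp.toLp 2 (Pi.single j 1)
      have h1 : ∑ k, star (g (Pi.single i 1) k) * g (Pi.single j 1) k
          = (inner ℂ (f Pi') (f Pj') : ℂ) := by
        rw [PiLp.inner_apply]
        exact Finset.sum_congr rfl fun k _ => mul_comm _ _
      have h2 : (inner ℂ Pi' Pj' : ℂ)
          = ∑ k, star ((Pi.single i 1 : n → ℂ) k) * (Pi.single j 1 : n → ℂ) k := by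
        rw [PiLp.inner_apply]
        exact Finset.sum_congr rfl fun k _ => mul_comm _ _
      rw [entry, h1, LinearIsometryEquiv.inner_map_map, h2]
      simp [Pi.single_apply, Matrix.one_apply, apply_ite, eq_comm]
    · have hmv : LinearMap.toMatrix' g *ᵥ v = g v := by
        rw [← Matrix.toLin'_apply, Matrix.toLin'_toMatrix']
      rw [hmv, hgapp]
      exact congrArg WithLp.ofLp hfv

open scoped MatrixOrder in
lemma exists_congr_mulVec {n : Type*} [Fintype n] [DecidableEq n]
    {P Q : Matrix n n ℂ} (hP : P.PosDef) (hQ : Q.PosDef) (x y : n → ℂ)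
    (h : star x ⬝ᵥ (P⁻¹ *ᵥ x) = star y ⬝ᵥ (Q⁻¹ *ᵥ y)) :
    ∃ G : Matrix n n ℂ, IsUnit G ∧ x = G *ᵥ y ∧ P = G * Q * Gᴴ := by
  classical
  set R := CFC.sqrt P with hR
  set T := CFC.sqrt Q with hT
  have hRR : R * R = P := CFC.sqrt_mul_sqrt_self P hP.posSemidef.nonneg
  have hTT : T * T = Q := CFC.sqrt_mul_sqrt_self Q hQ.posSemidef.nonneg
  have hRH : Rᴴ = R := (Matrix.nonneg_iff_posSemidef.mp (CFC.sqrt_nonneg P)).1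
  have hTH : Tᴴ = T := (Matrix.nonneg_iff_posSemidef.mp (CFC.sqrt_nonneg Q)).1
  have hRdet : IsUnit R.det := by
    have h1 : R.det * R.det = P.det := by rw [← Matrix.det_mul, hRR]
    have h2 : IsUnit P.det := (Matrix.isUnit_iff_isUnit_det P).mp hP.isUnit
    rw [isUnit_iff_ne_zero] at h2 ⊢
    intro hc
    rw [hc, mul_zero] at h1
    exact h2 h1.symm
  have hTdet : IsUnit T.det := by
    have h1 : T.det * T.det = Q.det := by rw [← Matrix.det_mul, hTT]
    have h2 : IsUnit Q.det := (Matrix.isUnit_iff_isUnit_det Q).mp hQ.isUnit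
    rw [isUnit_iff_ne_zero] at h2 ⊢
    intro hc
    rw [hc, mul_zero] at h1
    exact h2 h1.symm
  have hRu : IsUnit R := (Matrix.isUnit_iff_isUnit_det R).mpr hRdet
  have hTu : IsUnit T := (Matrix.isUnit_iff_isUnit_det T).mpr hTdet
  have hRinvH : (R⁻¹)ᴴ = R⁻¹ := by rw [Matrix.conjTranspose_nonsing_inv, hRH]
  have hTinvH : (T⁻¹)ᴴ = T⁻¹ := by rw [Matrix.conjTranspose_nonsing_inv, hTH]
  -- quadratic forms as norms
  have key : ∀ (M : Matrix n n ℂ) (hMH : Mᴴ = M) (z : n → ℂ),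
      star z ⬝ᵥ ((M * M) *ᵥ z) = star (M *ᵥ z) ⬝ᵥ (M *ᵥ z) := by
    intro M hMH z
    rw [Matrix.star_mulVec, hMH, ← Matrix.mulVec_mulVec, Matrix.dotProduct_mulVec]
  have hPinv : P⁻¹ = R⁻¹ * R⁻¹ := by rw [← hRR, Matrix.mul_inv_rev]
  have hQinv : Q⁻¹ = T⁻¹ * T⁻¹ := by rw [← hTT, Matrix.mul_inv_rev]
  have hx : star x ⬝ᵥ (P⁻¹ *ᵥ x) = star (R⁻¹ *ᵥ x) ⬝ᵥ (R⁻¹ *ᵥ x) := by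
    rw [hPinv, key _ hRinvH]
  have hy : star y ⬝ᵥ (Q⁻¹ *ᵥ y) = star (T⁻¹ *ᵥ y) ⬝ᵥ (T⁻¹ *ᵥ y) := by
    rw [hQinv, key _ hTinvH]
  obtain ⟨U, hUU, hUv⟩ := exists_unitary_mulVec (R⁻¹ *ᵥ x) (T⁻¹ *ᵥ y)
    (by rw [← hx, ← hy, h])
  have hUUc : U * Uᴴ = 1 := mul_eq_one_comm.mp hUU
  have hUu : IsUnit U := ⟨⟨U, Uᴴ, hUUc, hUU⟩, rfl⟩
  refine ⟨R * U * T⁻¹, (hRu.mul hUu).mul (Matrix.isUnit_nonsing_inv_iff.mpr hTu), ?_, ?_⟩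
  · rw [← Matrix.mulVec_mulVec, ← Matrix.mulVec_mulVec, hUv, Matrix.mulVec_mulVec,
      Matrix.mul_nonsing_inv _ hRdet, Matrix.one_mulVec]
  · have hGH : (R * U * T⁻¹)ᴴ = T⁻¹ * Uᴴ * R := by
      rw [Matrix.conjTranspose_mul, Matrix.conjTranspose_mul, hTinvH, hRH, Matrix.mul_assoc]
    have c1 : ∀ Z : Matrix n n ℂ, T⁻¹ * (T * Z) = Z := fun Z => by
      rw [← Matrix.mul_assoc, Matrix.nonsing_inv_mul _ hTdet, Matrix.one_mul]
    have c2 : ∀ Z : Matrix n n ℂ, T * (T⁻¹ * Z) = Z := fun Z => by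
      rw [← Matrix.mul_assoc, Matrix.mul_nonsing_inv _ hTdet, Matrix.one_mul]
    have c3 : ∀ Z : Matrix n n ℂ, U * (Uᴴ * Z) = Z := fun Z => by
      rw [← Matrix.mul_assoc, hUUc, Matrix.one_mul]
    rw [hGH, ← hRR, ← hTT]
    simp only [Matrix.mul_assoc, c2, c1, c3]

lemma hB32 {r q : ℕ} {S : Matrix (Fin r ⊕ Fin q) (Fin r ⊕ Fin q) ℂ}
    (hS : S.IsHermitian) : B32 S = (B23 S)ᴴ := by
  ext i j
  exact (hS.apply (Sum.inr i) (Sum.inl j)).symm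

lemma hB22H {r q : ℕ} {S : Matrix (Fin r ⊕ Fin q) (Fin r ⊕ Fin q) ℂ}
    (hS : S.IsHermitian) : (B22 S).IsHermitian := by
  ext i j
  exact hS.apply (Sum.inl i) (Sum.inl j)

lemma hB33H {r q : ℕ} {S : Matrix (Fin r ⊕ Fin q) (Fin r ⊕ Fin q) ℂ}
    (hS : S.IsHermitian) : (B33 S).IsHermitian := by
  ext i j
  exact hS.apply (Sum.inr i) (Sum.inr j)

lemma blocks_eq {r q : ℕ} {S : Matrix (Fin r ⊕ Fin q) (Fin r ⊕ Fin q) ℂ}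
    (hS : S.IsHermitian) :
    S = fromBlocks (B22 S) (B23 S) (B23 S)ᴴ (B33 S) := by
  rw [← hB32 hS]
  ext (i | i) (j | j) <;> rfl

lemma posDef_B33 {r q : ℕ} {S : Matrix (Fin r ⊕ Fin q) (Fin r ⊕ Fin q) ℂ}
    (hS : S.PosDef) : (B33 S).PosDef := by
  refine Matrix.PosDef.of_dotProduct_mulVec_pos (hB33H hS.1) (fun x hx => ?_)
  have hz : (Sum.elim 0 x : Fin r ⊕ Fin q → ℂ) ≠ 0 := by
    obtain ⟨i, hi⟩ := Function.ne_iff.mp hx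
    exact Function.ne_iff.mpr ⟨Sum.inr i, hi⟩
  have := hS.dotProduct_mulVec_pos hz
  have heq : star (Sum.elim 0 x : Fin r ⊕ Fin q → ℂ) ⬝ᵥ (S *ᵥ Sum.elim 0 x)
      = star x ⬝ᵥ (B33 S *ᵥ x) := by
    nth_rewrite 1 [blocks_eq hS.1]
    rw [Matrix.fromBlocks_mulVec, Function.star_sumElim]
    show (star (0 : Fin r → ℂ) ⊕ᵥ star x) ⬝ᵥ _ = _
    simp [sumElim_dotProduct_sumElim]
  rwa [heq] at this

lemma posDef_schur {r q : ℕ} {S : Matrix (Fin r ⊕ Fin q) (Fin r ⊕ Fin q) ℂ}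
    (hS : S.PosDef) : (schur S).PosDef := by
  have h33 := posDef_B33 hS
  have hschur_eq : schur S = B22 S - B23 S * (B33 S)⁻¹ * (B23 S)ᴴ := by
    rw [schur, hB32 hS.1]
  refine Matrix.PosDef.of_dotProduct_mulVec_pos ?_ ?_
  · rw [hschur_eq]
    refine (hB22H hS.1).sub ?_
    show (B23 S * (B33 S)⁻¹ * (B23 S)ᴴ)ᴴ = _
    rw [Matrix.conjTranspose_mul, Matrix.conjTranspose_mul, Matrix.conjTranspose_conjTranspose,
      (hB33H hS.1).inv.eq, ← Matrix.mul_assoc]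
  · intro x hx
    haveI : Invertible (B33 S) := h33.isUnit.invertible
    set y : Fin q → ℂ := -(((B33 S)⁻¹ * (B23 S)ᴴ) *ᵥ x) with hy
    have key := Matrix.schur_complement_eq₂₂ (B22 S) (B23 S) x y h33.1
    have hz : (x ⊕ᵥ y : Fin r ⊕ Fin q → ℂ) ≠ 0 := by
      obtain ⟨i, hi⟩ := Function.ne_iff.mp hx
      exact Function.ne_iff.mpr ⟨Sum.inl i, hi⟩
    have hpos := hS.dotProduct_mulVec_pos hz
    have hlhs : star (x ⊕ᵥ y) ⬝ᵥ (S *ᵥ (x ⊕ᵥ y))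
        = star (x ⊕ᵥ y) ᵥ* fromBlocks (B22 S) (B23 S) (B23 S)ᴴ (B33 S) ⬝ᵥ (x ⊕ᵥ y) := by
      rw [Matrix.dotProduct_mulVec]
      nth_rewrite 1 [blocks_eq hS.1]
      rfl
    have hzero : ((B33 S)⁻¹ * (B23 S)ᴴ) *ᵥ x + y = 0 := by
      simp [hy]
    rw [hlhs, key, hzero] at hpos
    have hterm : star (0 : Fin q → ℂ) ᵥ* B33 S ⬝ᵥ (0 : Fin q → ℂ) = 0 := by simp
    rw [hterm, zero_add] at hpos
    rw [Matrix.dotProduct_mulVec, hschur_eq]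
    exact hpos

lemma decomp {r q : ℕ} {S : Matrix (Fin r ⊕ Fin q) (Fin r ⊕ Fin q) ℂ}
    (hS : S.PosDef) :
    S = fromBlocks 1 (B23 S * (B33 S)⁻¹) 0 1 * fromBlocks (schur S) 0 0 (B33 S) *
        (fromBlocks 1 (B23 S * (B33 S)⁻¹) 0 1)ᴴ := by
  have hdet : IsUnit (B33 S).det := (Matrix.isUnit_iff_isUnit_det _).mp (posDef_B33 hS).isUnit
  have hXB : B23 S * (B33 S)⁻¹ * B33 S = B23 S := by
    rw [Matrix.mul_assoc, Matrix.nonsing_inv_mul _ hdet, Matrix.mul_one]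
  have hXH : (B23 S * (B33 S)⁻¹)ᴴ = (B33 S)⁻¹ * B32 S := by
    rw [Matrix.conjTranspose_mul, (hB33H hS.1).inv.eq, hB32 hS.1]
  have hBXH : B33 S * (B23 S * (B33 S)⁻¹)ᴴ = B32 S := by
    rw [hXH, ← Matrix.mul_assoc, Matrix.mul_nonsing_inv _ hdet, Matrix.one_mul]
  rw [Matrix.fromBlocks_conjTranspose, Matrix.fromBlocks_multiply, Matrix.fromBlocks_multiply]
  simp only [Matrix.one_mul, Matrix.mul_one, Matrix.mul_zero, Matrix.zero_mul, add_zero, zero_add,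
    Matrix.conjTranspose_one, Matrix.conjTranspose_zero, Matrix.nonsing_inv_mul _ hdet]
  nth_rewrite 1 [blocks_eq hS.1]
  rw [Matrix.fromBlocks_inj]
  refine ⟨?_, ?_, ?_, rfl⟩
  · rw [hXH, ← Matrix.mul_assoc, hXB, schur, sub_add_cancel]
  · rw [hXB]
  · rw [hBXH, hB32 hS.1]

/-- Bottom-block step of the maximality proof (Appendix B): if the two quadratic forms
`w₃† S₃₃⁻¹ w₃` and `(w₂ − S₂₃S₃₃⁻¹w₃)† (S₂₂ − S₂₃S₃₃⁻¹S₃₂)⁻¹ (w₂ − S₂₃S₃₃⁻¹w₃)` agree for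
`(w, S)` and `(w̄, S̄)` (both `S`, `S̄` Hermitian positive definite), then there exists a
block upper-triangular `D = [[D₂₂, D₂₃], [0, D₃₃]]` with invertible diagonal blocks such
that `w = D w̄` and `S = D S̄ Dᴴ`. -/
theorem stmt17 (r q : ℕ) (hr : 1 ≤ r) (hq : 1 ≤ q)
    (S Sb : Matrix (Fin r ⊕ Fin q) (Fin r ⊕ Fin q) ℂ) (hS : S.PosDef) (hSb : Sb.PosDef)
    (w wb : Fin r ⊕ Fin q → ℂ)
    (h3 : star (blkBot w) ⬝ᵥ ((B33 S)⁻¹ *ᵥ blkBot w) =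
      star (blkBot wb) ⬝ᵥ ((B33 Sb)⁻¹ *ᵥ blkBot wb))
    (h2 : star (wdot w S) ⬝ᵥ ((schur S)⁻¹ *ᵥ wdot w S) =
      star (wdot wb Sb) ⬝ᵥ ((schur Sb)⁻¹ *ᵥ wdot wb Sb)) :
    ∃ D : Matrix (Fin r ⊕ Fin q) (Fin r ⊕ Fin q) ℂ,
      (∀ i j, D (Sum.inr i) (Sum.inl j) = 0) ∧
      IsUnit (D.submatrix Sum.inl Sum.inl) ∧
      IsUnit (D.submatrix Sum.inr Sum.inr) ∧
      w = D *ᵥ wb ∧ S = D * Sb * Dᴴ := by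
  classical
  obtain ⟨G₂, hG₂u, hw2, hSig2eq⟩ :=
    exists_congr_mulVec (posDef_schur hS) (posDef_schur hSb) (wdot w S) (wdot wb Sb) h2
  obtain ⟨G₃, hG₃u, hw3, h33eq⟩ :=
    exists_congr_mulVec (posDef_B33 hS) (posDef_B33 hSb) (blkBot w) (blkBot wb) h3
  set X := B23 S * (B33 S)⁻¹ with hX
  set Xb := B23 Sb * (B33 Sb)⁻¹ with hXb
  set L : Matrix (Fin r ⊕ Fin q) (Fin r ⊕ Fin q) ℂ := fromBlocks 1 X 0 1 with hL
  set Lb : Matrix (Fin r ⊕ Fin q) (Fin r ⊕ Fin q) ℂ := fromBlocks 1 Xb 0 1 with hLb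
  set Lbinv : Matrix (Fin r ⊕ Fin q) (Fin r ⊕ Fin q) ℂ := fromBlocks 1 (-Xb) 0 1 with hLbinv
  set G : Matrix (Fin r ⊕ Fin q) (Fin r ⊕ Fin q) ℂ := fromBlocks G₂ 0 0 G₃ with hG
  have hLbinvLb : Lbinv * Lb = 1 := by
    rw [hLbinv, hLb, Matrix.fromBlocks_multiply]
    simp [Matrix.fromBlocks_one]
  have hD : L * G * Lbinv = fromBlocks G₂ (G₂ * (-Xb) + X * G₃) 0 G₃ := by
    rw [hL, hG, hLbinv, Matrix.fromBlocks_multiply, Matrix.fromBlocks_multiply]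
    simp
  refine ⟨L * G * Lbinv, ?_, ?_, ?_, ?_, ?_⟩
  · intro i j
    rw [hD]
    simp [Matrix.fromBlocks]
  · have : (L * G * Lbinv).submatrix Sum.inl Sum.inl = G₂ := by
      rw [hD]; ext i j; simp [Matrix.fromBlocks]
    rw [this]; exact hG₂u
  · have : (L * G * Lbinv).submatrix Sum.inr Sum.inr = G₃ := by
      rw [hD]; ext i j; simp [Matrix.fromBlocks]
    rw [this]; exact hG₃u
  · -- vector equation
    have s1 : Lbinv *ᵥ wb = wdot wb Sb ⊕ᵥ blkBot wb := by
      rw [hLbinv, Matrix.fromBlocks_mulVec]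
      simp only [Matrix.one_mulVec, Matrix.zero_mulVec, Matrix.neg_mulVec, zero_add, add_zero]
      funext z
      cases z with
      | inl i =>
          show (wb ∘ Sum.inl) i + (-(Xb *ᵥ (wb ∘ Sum.inr))) i = wdot wb Sb i
          rw [wdot]
          show _ = blkTop wb i - (Xb *ᵥ blkBot wb) i
          rw [sub_eq_add_neg]
          rfl
      | inr i => rfl
    have s2 : G *ᵥ (wdot wb Sb ⊕ᵥ blkBot wb) = wdot w S ⊕ᵥ blkBot w := by
      rw [hG, Matrix.fromBlocks_mulVec]
      simp only [Matrix.zero_mulVec, zero_add, add_zero]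
      have e1 : (wdot wb Sb ⊕ᵥ blkBot wb) ∘ Sum.inl = wdot wb Sb := rfl
      have e2 : (wdot wb Sb ⊕ᵥ blkBot wb) ∘ Sum.inr = blkBot wb := rfl
      rw [e1, e2, ← hw2, ← hw3]
    have s3 : L *ᵥ (wdot w S ⊕ᵥ blkBot w) = w := by
      rw [hL, Matrix.fromBlocks_mulVec]
      simp only [Matrix.one_mulVec, Matrix.zero_mulVec, zero_add, add_zero]
      have e1 : (wdot w S ⊕ᵥ blkBot w) ∘ Sum.inl = wdot w S := rfl
      have e2 : (wdot w S ⊕ᵥ blkBot w) ∘ Sum.inr = blkBot w := rfl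
      rw [e1, e2]
      funext z
      cases z with
      | inl i => show wdot w S i + (X *ᵥ blkBot w) i = w (Sum.inl i)
                 rw [wdot]; show blkTop w i - (X *ᵥ blkBot w) i + (X *ᵥ blkBot w) i = _
                 rw [sub_add_cancel]; rfl
      | inr i => rfl
    rw [← Matrix.mulVec_mulVec, ← Matrix.mulVec_mulVec, s1, s2, s3]
  · -- matrix equation
    have hdec : S = L * fromBlocks (schur S) 0 0 (B33 S) * Lᴴ := by
      rw [hL, hX]; exact decomp hS
    have hdecb : Sb = Lb * fromBlocks (schur Sb) 0 0 (B33 Sb) * Lbᴴ := by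
      rw [hLb, hXb]; exact decomp hSb
    have hM : fromBlocks (schur S) 0 0 (B33 S)
        = G * fromBlocks (schur Sb) 0 0 (B33 Sb) * Gᴴ := by
      rw [hG, Matrix.fromBlocks_conjTranspose, Matrix.fromBlocks_multiply,
        Matrix.fromBlocks_multiply]
      simp only [Matrix.mul_zero, Matrix.zero_mul, add_zero, zero_add,
        Matrix.conjTranspose_zero]
      rw [Matrix.fromBlocks_inj]
      exact ⟨hSig2eq, rfl, rfl, h33eq⟩
    have hc1 : ∀ Z : Matrix (Fin r ⊕ Fin q) (Fin r ⊕ Fin q) ℂ, Lbinv * (Lb * Z) = Z := by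
      intro Z; rw [← Matrix.mul_assoc, hLbinvLb, Matrix.one_mul]
    have hLbH : Lbᴴ * Lbinvᴴ = 1 := by
      rw [← Matrix.conjTranspose_mul, hLbinvLb, Matrix.conjTranspose_one]
    have hc2 : ∀ Z : Matrix (Fin r ⊕ Fin q) (Fin r ⊕ Fin q) ℂ, Lbᴴ * (Lbinvᴴ * Z) = Z := by
      intro Z; rw [← Matrix.mul_assoc, hLbH, Matrix.one_mul]
    nth_rewrite 1 [hdec]
    rw [hM]
    conv_rhs => rw [hdecb]
    simp only [Matrix.conjTranspose_mul, Matrix.mul_assoc, hc1, hc2]
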